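/- Let α ∈ (0,∞)^d with h(α) = min_j α_j > 1/2, r ≥ 2, and let Λ = { n ∈ ℤ^d : ∏_{j=1}^d (1 + |n_j|) ≤ r } be the hyperbolic cross of order r. Then for every f ∈ H^α_mix(𝕋^d) with Fourier coefficients c = (f̂_n), the tail satisfies Σ_{n ∉ Λ} |f̂_n| ≲_{d,α} r^{−h(α)+1/2} (log r)^{(d−1)/2} ‖f‖_{H^α_mix}. -/

import Mathlib

set_option maxHeartbeats 1000000

open Real Finset


private lemma log_ratio (x : ℝ) (hx : 0 < x) : (x+1)⁻¹ ≤ Real.log (x+1) - Real.log x := by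
  have hx1 : (0:ℝ) < x + 1 := by linarith
  have h := Real.log_le_sub_one_of_pos (show (0:ℝ) < x/(x+1) by positivity)
  rw [Real.log_div (ne_of_gt hx) (ne_of_gt hx1)] at h
  have : x/(x+1) - 1 = -(x+1)⁻¹ := by field_simp; ring
  rw [this] at h
  linarith

private lemma rpow_step (s x : ℝ) (hs : 1 < s) (hx : 0 < x) :
    (s-1) * (x+1)^(-s) ≤ x^(1-s) - (x+1)^(1-s) := by
  have hx1 : (0:ℝ) < x + 1 := by linarith
  have hlog : (x+1)⁻¹ ≤ Real.log (x+1) - Real.log x := log_ratio x hx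
  have hdiv : (0:ℝ) < (x+1)/x := by positivity
  have key : 1 + (s-1)/(x+1) ≤ ((x+1)/x)^(s-1) := by
    have h1 : Real.log ((x+1)/x) = Real.log (x+1) - Real.log x :=
      Real.log_div (ne_of_gt hx1) (ne_of_gt hx)
    have h2 : 1 + (s-1) * Real.log ((x+1)/x) ≤ Real.exp ((s-1) * Real.log ((x+1)/x)) := by
      have := Real.add_one_le_exp ((s-1) * Real.log ((x+1)/x))
      linarith
    have h3 : ((x+1)/x)^(s-1) = Real.exp (Real.log ((x+1)/x) * (s-1)) :=
      Real.rpow_def_of_pos hdiv _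
    rw [h3, mul_comm]
    refine le_trans ?_ h2
    have h4 : (s-1)/(x+1) ≤ (s-1) * Real.log ((x+1)/x) := by
      rw [h1, div_eq_mul_inv]
      exact mul_le_mul_of_nonneg_left hlog (by linarith)
    linarith
  have hmul := mul_le_mul_of_nonneg_right key (le_of_lt (Real.rpow_pos_of_pos hx1 (1-s)))
  have e1 : ((x+1)/x)^(s-1) * (x+1)^(1-s) = x^(1-s) := by
    rw [Real.div_rpow (le_of_lt hx1) (le_of_lt hx), div_mul_eq_mul_div,
      ← Real.rpow_add hx1]
    have : s - 1 + (1-s) = 0 := by ring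
    rw [this, Real.rpow_zero]
    rw [show (1:ℝ) - s = -(s-1) by ring, Real.rpow_neg (le_of_lt hx), one_div]
  have e2 : (1 + (s-1)/(x+1)) * (x+1)^(1-s)
      = (x+1)^(1-s) + (s-1) * (x+1)^(-s) := by
    have : (x+1)^(1-s) / (x+1) = (x+1)^(-s) := by
      nth_rewrite 2 [show x + 1 = (x+1)^(1:ℝ) by rw [Real.rpow_one]]
      rw [← Real.rpow_sub hx1]
      norm_num
    rw [← this]
    ring
  rw [e2, e1] at hmul
  linarith

private lemma summable_shift (s : ℝ) (hs : 1 < s) :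
    Summable (fun k : ℕ => ((k:ℝ)+1)^(-s)) := by
  have h0 : Summable (fun k : ℕ => ((k:ℝ)^s)⁻¹) := Real.summable_nat_rpow_inv.2 hs
  have h1 : Summable (fun k : ℕ => (((k+1:ℕ):ℝ)^s)⁻¹) := (summable_nat_add_iff 1).2 h0
  refine h1.congr fun k => ?_
  rw [← Real.rpow_neg (by positivity)]
  push_cast
  ring_nf

private lemma nat_tail (s : ℝ) (hs : 1 < s) (r : ℝ) (hr : 1 ≤ r) :
    Summable (fun k : ℕ => if r < (k:ℝ)+1 then ((k:ℝ)+1)^(-s) else 0) ∧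
    ∑' k : ℕ, (if r < (k:ℝ)+1 then ((k:ℝ)+1)^(-s) else 0)
      ≤ (s-1)⁻¹ * 2^(s-1) * r^(1-s) := by
  have hs1 : (0:ℝ) < s - 1 := by linarith
  have hr0 : (0:ℝ) < r := by linarith
  have hsum0 := summable_shift s hs
  have hite : Summable (fun k : ℕ => if r < (k:ℝ)+1 then ((k:ℝ)+1)^(-s) else 0) := by
    refine hsum0.of_nonneg_of_le (fun k => ?_) (fun k => ?_)
    · split <;> positivity
    · split
      · exact le_rfl
      · positivity
  refine ⟨hite, ?_⟩
  set K := Nat.floor r with hK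
  have hK1 : 1 ≤ K := Nat.le_floor (by exact_mod_cast hr)
  have hKr : (K:ℝ) ≤ r := Nat.floor_le (le_of_lt hr0)
  have hrK : r < (K:ℝ) + 1 := Nat.lt_floor_add_one r
  have hK2 : r/2 ≤ (K:ℝ) := by
    rcases le_or_gt 2 r with h2 | h2
    · linarith
    · have : (1:ℝ) ≤ (K:ℝ) := by exact_mod_cast hK1
      linarith
  have hKpos : (0:ℝ) < (K:ℝ) := by positivity
  set A : ℕ → ℝ := fun k => ((max k K : ℕ):ℝ)^(1-s) with hA
  have hpt : ∀ k : ℕ, (if r < (k:ℝ)+1 then ((k:ℝ)+1)^(-s) else 0)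
      ≤ (s-1)⁻¹ * (A k - A (k+1)) := by
    intro k
    by_cases hk : r < (k:ℝ)+1
    · have hKk : K ≤ k := by
        have : (K:ℝ) < (k:ℝ) + 1 := lt_of_le_of_lt hKr hk
        have : K < k + 1 := by exact_mod_cast this
        omega
      have h1 : max k K = k := max_eq_left hKk
      have h2 : max (k+1) K = k + 1 := max_eq_left (by omega)
      have hkpos : (0:ℝ) < (k:ℝ) := by
        have : (1:ℝ) ≤ (K:ℝ) := by exact_mod_cast hK1
        have : (K:ℝ) ≤ (k:ℝ) := by exact_mod_cast hKk
        linarith [show (1:ℝ) ≤ (K:ℝ) by exact_mod_cast hK1]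
      have hstep := rpow_step s (k:ℝ) hs hkpos
      rw [if_pos hk, hA]
      simp only [h1, h2]
      push_cast
      calc ((k:ℝ)+1)^(-s) = (s-1)⁻¹ * ((s-1) * ((k:ℝ)+1)^(-s)) := by
            field_simp
        _ ≤ (s-1)⁻¹ * ((k:ℝ)^(1-s) - ((k:ℝ)+1)^(1-s)) :=
            mul_le_mul_of_nonneg_left hstep (by positivity)
    · rw [if_neg hk]
      have hmono : A (k+1) ≤ A k := by
        apply Real.rpow_le_rpow_of_nonpos
        · positivity
        · exact_mod_cast Nat.cast_le.2 (max_le_max (Nat.le_succ k) le_rfl)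
        · linarith
      have h0 : 0 ≤ (s-1)⁻¹ := by positivity
      nlinarith
  refine hite.tsum_le_of_sum_le fun F => ?_
  obtain ⟨N, hFN⟩ := F.exists_nat_subset_range
  calc ∑ k ∈ F, (if r < (k:ℝ)+1 then ((k:ℝ)+1)^(-s) else 0)
      ≤ ∑ k ∈ range N, (if r < (k:ℝ)+1 then ((k:ℝ)+1)^(-s) else 0) := by
        refine Finset.sum_le_sum_of_subset_of_nonneg hFN fun k _ _ => ?_
        split <;> positivity
    _ ≤ ∑ k ∈ range N, (s-1)⁻¹ * (A k - A (k+1)) :=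
        Finset.sum_le_sum fun k _ => hpt k
    _ = (s-1)⁻¹ * (A 0 - A N) := by rw [← Finset.mul_sum, Finset.sum_range_sub' A N]
    _ ≤ (s-1)⁻¹ * A 0 := by
        have : 0 ≤ A N := by rw [hA]; positivity
        have h0 : 0 ≤ (s-1)⁻¹ := by positivity
        nlinarith
    _ ≤ (s-1)⁻¹ * 2^(s-1) * r^(1-s) := by
        have e0 : A 0 = (K:ℝ)^(1-s) := by rw [hA]; norm_num
        have h1 : (K:ℝ)^(1-s) ≤ (r/2)^(1-s) :=
          Real.rpow_le_rpow_of_nonpos (by positivity) hK2 (by linarith)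
        have h2 : (r/2)^(1-s) = 2^(s-1) * r^(1-s) := by
          rw [Real.div_rpow (le_of_lt hr0) (by norm_num)]
          rw [show (1:ℝ) - s = -(s-1) by ring, Real.rpow_neg (by norm_num : (0:ℝ) ≤ 2)]
          field_simp
        rw [e0]
        calc (s-1)⁻¹ * (K:ℝ)^(1-s) ≤ (s-1)⁻¹ * (r/2)^(1-s) :=
              mul_le_mul_of_nonneg_left h1 (by positivity)
          _ = (s-1)⁻¹ * 2^(s-1) * r^(1-s) := by rw [h2]; ring

private lemma nat_harm (r : ℝ) (hr : 1 ≤ r) :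
    Summable (fun k : ℕ => if ((k:ℝ)+1) ≤ r then ((k:ℝ)+1)⁻¹ else 0) ∧
    ∑' k : ℕ, (if ((k:ℝ)+1) ≤ r then ((k:ℝ)+1)⁻¹ else 0) ≤ 1 + Real.log r := by
  have hr0 : (0:ℝ) < r := by linarith
  have hfin : ∀ k : ℕ, k ∉ Finset.range (Nat.floor r + 1) →
      (if ((k:ℝ)+1) ≤ r then ((k:ℝ)+1)⁻¹ else 0) = 0 := by
    intro k hk
    rw [if_neg]
    intro hle
    apply hk
    rw [Finset.mem_range]
    have : (k:ℝ) ≤ r - 1 := by linarith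
    have : k ≤ Nat.floor r := Nat.le_floor (by linarith)
    omega
  have hsum : Summable (fun k : ℕ => if ((k:ℝ)+1) ≤ r then ((k:ℝ)+1)⁻¹ else 0) :=
    summable_of_ne_finset_zero hfin
  refine ⟨hsum, ?_⟩
  set f : ℕ → ℝ := fun i => Real.log (min ((i:ℝ)+1) r) with hf
  have hpt : ∀ k : ℕ, (if ((k:ℝ)+1+1) ≤ r then ((k:ℝ)+1+1)⁻¹ else 0) ≤ f (k+1) - f k := by
    intro k
    have hposk : (0:ℝ) < min ((k:ℝ)+1) r := lt_min (by positivity) hr0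
    by_cases hk : ((k:ℝ)+1+1) ≤ r
    · rw [if_pos hk]
      have e1 : min ((k:ℝ)+1+1) r = (k:ℝ)+1+1 := min_eq_left hk
      have e2 : min ((k:ℝ)+1) r = (k:ℝ)+1 := min_eq_left (by linarith)
      have := log_ratio ((k:ℝ)+1) (by positivity)
      rw [hf]
      push_cast
      rw [e1, e2]
      linarith
    · rw [if_neg hk]
      have : f k ≤ f (k+1) := by
        rw [hf]
        apply Real.log_le_log hposk
        push_cast
        exact min_le_min (by linarith) le_rfl
      linarith
  refine hsum.tsum_le_of_sum_le fun F => ?_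
  obtain ⟨N, hFN⟩ := F.exists_nat_subset_range
  calc ∑ k ∈ F, (if ((k:ℝ)+1) ≤ r then ((k:ℝ)+1)⁻¹ else 0)
      ≤ ∑ k ∈ range (N+1), (if ((k:ℝ)+1) ≤ r then ((k:ℝ)+1)⁻¹ else 0) := by
        refine Finset.sum_le_sum_of_subset_of_nonneg
          (hFN.trans (Finset.range_subset_range.2 (Nat.le_succ N))) fun k _ _ => ?_
        split <;> positivity
    _ = (if ((0:ℝ)+1) ≤ r then ((0:ℝ)+1)⁻¹ else 0)
        + ∑ k ∈ range N, (if (((k+1:ℕ):ℝ)+1) ≤ r then (((k+1:ℕ):ℝ)+1)⁻¹ else 0) := by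
        rw [Finset.sum_range_succ']
        push_cast
        ring
    _ ≤ 1 + ∑ k ∈ range N, (f (k+1) - f k) := by
        have h0 : (if ((0:ℝ)+1) ≤ r then ((0:ℝ)+1)⁻¹ else 0) ≤ 1 := by
          split <;> norm_num
        have h1 : ∑ k ∈ range N, (if (((k+1:ℕ):ℝ)+1) ≤ r then (((k+1:ℕ):ℝ)+1)⁻¹ else 0)
            ≤ ∑ k ∈ range N, (f (k+1) - f k) := by
          refine Finset.sum_le_sum fun k _ => ?_
          have := hpt k
          push_cast
          push_cast at this
          exact this
        linarith
    _ ≤ 1 + Real.log r := by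
        rw [Finset.sum_range_sub f N]
        have hf0 : f 0 = 0 := by
          rw [hf]
          norm_num [min_eq_left hr]
        have hfN : f N ≤ Real.log r := by
          rw [hf]
          exact Real.log_le_log (lt_min (by positivity) hr0) (min_le_right _ _)
        linarith

private lemma int_of_nat (G : ℕ → ℝ) (hG0 : ∀ k, 0 ≤ G k) (hG : Summable G) :
    Summable (fun m : ℤ => G m.natAbs) ∧ ∑' m : ℤ, G m.natAbs ≤ 2 * ∑' k, G k := by
  have h1 : Summable (fun n : ℕ => G ((n:ℤ).natAbs)) := by simpa using hG
  have h2 : Summable (fun n : ℕ => G ((-((n:ℤ)+1)).natAbs)) := by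
    have hsh : Summable (fun n : ℕ => G (n+1)) := (summable_nat_add_iff 1).2 hG
    refine hsh.congr fun n => ?_
    have e : (-((n:ℤ)+1)).natAbs = n+1 := by omega
    rw [e]
  refine ⟨Summable.of_nat_of_neg_add_one h1 h2, ?_⟩
  rw [tsum_of_nat_of_neg_add_one h1 h2]
  have e1 : ∑' n : ℕ, G ((n:ℤ).natAbs) = ∑' k, G k := tsum_congr fun n => by simp
  have hle : ∑' n : ℕ, G ((-((n:ℤ)+1)).natAbs) ≤ ∑' k, G k := by
    have e2 : ∀ n : ℕ, G ((-((n:ℤ)+1)).natAbs) = G (n+1) := fun n => by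
      have e : (-((n:ℤ)+1)).natAbs = n+1 := by omega
      rw [e]
    rw [tsum_congr e2]
    exact Summable.tsum_le_tsum_of_inj (· + 1) (add_left_injective 1)
      (fun c _ => hG0 c) (fun n => le_rfl) ((summable_nat_add_iff 1).2 hG) hG
  linarith [e1, hle]

private lemma ofReal_prod {ι : Type*} (s : Finset ι) (f : ι → ℝ) (h0 : ∀ i ∈ s, 0 ≤ f i) :
    ENNReal.ofReal (∏ i ∈ s, f i) = ∏ i ∈ s, ENNReal.ofReal (f i) := by
  induction s using Finset.cons_induction with
  | empty => simp
  | cons a s ha ih =>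
    rw [Finset.prod_cons, Finset.prod_cons,
      ENNReal.ofReal_mul (h0 a (Finset.mem_cons_self a s)),
      ih fun i hi => h0 i (Finset.mem_cons_of_mem hi)]

private lemma tsum_pi_prod (w : ℤ → ENNReal) (d : ℕ) :
    ∑' n : Fin d → ℤ, ∏ j, w (n j) = (∑' m : ℤ, w m)^d := by
  induction d with
  | zero =>
    rw [tsum_eq_single (fun i => (0:ℤ)) (fun b hb => absurd (Subsingleton.elim b _) hb)]
    simp
  | succ d ih =>
    rw [← (Fin.consEquiv (fun _ : Fin (d+1) => ℤ)).tsum_eq]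
    have e : ∀ p : ℤ × (Fin d → ℤ),
        (∏ j, w (((Fin.consEquiv (fun _ : Fin (d+1) => ℤ)) p) j))
          = w p.1 * ∏ j, w (p.2 j) := by
      intro p
      rw [Fin.prod_univ_succ]
      simp [Fin.consEquiv]
    rw [tsum_congr e, ENNReal.tsum_prod']
    have e2 : ∀ m : ℤ, ∑' n : Fin d → ℤ, w m * ∏ j, w (n j)
        = w m * ∑' n : Fin d → ℤ, ∏ j, w (n j) := fun m => ENNReal.tsum_mul_left
    rw [tsum_congr e2]
    rw [ENNReal.tsum_mul_right, ih, pow_succ]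
    ring

private lemma natAbs_eq (m : ℤ) : ((m.natAbs : ℝ)) = |(m:ℝ)| := by
  rw [Nat.cast_natAbs]
  exact Int.cast_abs

private lemma int_summable_q (s : ℝ) (hs : 1 < s) :
    Summable (fun m : ℤ => (1+|(m:ℝ)|)^(-s)) := by
  refine ((int_of_nat (fun k => ((k:ℝ)+1)^(-s)) (fun k => by positivity)
    (summable_shift s hs)).1).congr fun m => ?_
  rw [natAbs_eq, add_comm]

private lemma int_tail (s : ℝ) (hs : 1 < s) (r : ℝ) (hr : 1 ≤ r) :
    Summable (fun m : ℤ => if r < 1+|(m:ℝ)| then (1+|(m:ℝ)|)^(-s) else 0) ∧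
    ∑' m : ℤ, (if r < 1+|(m:ℝ)| then (1+|(m:ℝ)|)^(-s) else 0)
      ≤ 2 * ((s-1)⁻¹ * 2^(s-1)) * r^(1-s) := by
  obtain ⟨h1, h2⟩ := nat_tail s hs r hr
  obtain ⟨h3, h4⟩ := int_of_nat (fun k => if r < (k:ℝ)+1 then ((k:ℝ)+1)^(-s) else 0)
    (fun k => by split <;> positivity) h1
  have e : ∀ m : ℤ, (if r < ((m.natAbs:ℝ))+1 then ((m.natAbs:ℝ)+1)^(-s) else 0)
      = (if r < 1+|(m:ℝ)| then (1+|(m:ℝ)|)^(-s) else 0) := by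
    intro m
    rw [natAbs_eq, add_comm]
  constructor
  · exact h3.congr e
  · rw [← tsum_congr e]
    calc ∑' m : ℤ, (if r < ((m.natAbs:ℝ))+1 then ((m.natAbs:ℝ)+1)^(-s) else 0)
        ≤ 2 * ∑' k : ℕ, (if r < (k:ℝ)+1 then ((k:ℝ)+1)^(-s) else 0) := h4
      _ ≤ 2 * ((s-1)⁻¹ * 2^(s-1) * r^(1-s)) := by linarith
      _ = 2 * ((s-1)⁻¹ * 2^(s-1)) * r^(1-s) := by ring

private lemma int_harm (r : ℝ) (hr : 1 ≤ r) :
    Summable (fun m : ℤ => if 1+|(m:ℝ)| ≤ r then (1+|(m:ℝ)|)⁻¹ else 0) ∧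
    ∑' m : ℤ, (if 1+|(m:ℝ)| ≤ r then (1+|(m:ℝ)|)⁻¹ else 0) ≤ 2 * (1 + Real.log r) := by
  obtain ⟨h1, h2⟩ := nat_harm r hr
  obtain ⟨h3, h4⟩ := int_of_nat (fun k => if ((k:ℝ)+1) ≤ r then ((k:ℝ)+1)⁻¹ else 0)
    (fun k => by split <;> positivity) h1
  have e : ∀ m : ℤ, (if ((m.natAbs:ℝ))+1 ≤ r then ((m.natAbs:ℝ)+1)⁻¹ else 0)
      = (if 1+|(m:ℝ)| ≤ r then (1+|(m:ℝ)|)⁻¹ else 0) := by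
    intro m
    rw [natAbs_eq, add_comm]
  constructor
  · exact h3.congr e
  · rw [← tsum_congr e]
    calc ∑' m : ℤ, (if ((m.natAbs:ℝ))+1 ≤ r then ((m.natAbs:ℝ)+1)⁻¹ else 0)
        ≤ 2 * ∑' k : ℕ, (if ((k:ℝ)+1) ≤ r then ((k:ℝ)+1)⁻¹ else 0) := h4
      _ ≤ 2 * (1 + Real.log r) := by linarith

private lemma lift_tsum_le {f : ℤ → ℝ} (h0 : ∀ m, 0 ≤ f m) (hsf : Summable f) {M : ℝ}
    (hM : ∑' m, f m ≤ M) : ∑' m : ℤ, ENNReal.ofReal (f m) ≤ ENNReal.ofReal M := by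
  rw [← ENNReal.ofReal_tsum_of_nonneg h0 hsf]
  exact ENNReal.ofReal_le_ofReal hM

private lemma S_zero (s r : ℝ) (hr : 1 ≤ r) :
    (∑' n : Fin 0 → ℤ, (if r < ∏ j, (1 + |(n j : ℝ)|) then
      ENNReal.ofReal (∏ j, (1 + |(n j : ℝ)|) ^ (-s)) else 0)) = 0 := by
  have e : ∀ n : Fin 0 → ℤ, (if r < ∏ j, (1 + |(n j : ℝ)|) then
      ENNReal.ofReal (∏ j, (1 + |(n j : ℝ)|) ^ (-s)) else 0) = 0 := by
    intro n
    rw [if_neg]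
    simp only [Finset.univ_eq_empty, Finset.prod_empty]
    linarith
  rw [tsum_congr e, tsum_zero]

private lemma key (s : ℝ) (hs : 1 < s) (d : ℕ) :
    ∃ B : ℝ, 0 < B ∧ ∀ r : ℝ, 1 ≤ r →
      (∑' n : Fin d → ℤ, (if r < ∏ j, (1 + |(n j : ℝ)|) then
          ENNReal.ofReal (∏ j, (1 + |(n j : ℝ)|) ^ (-s)) else 0))
        ≤ ENNReal.ofReal (B * r ^ (1-s) * (1 + Real.log r) ^ (d - 1)) := by
  have hs1 : (0:ℝ) < s - 1 := by linarith
  induction d with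
  | zero =>
    refine ⟨1, one_pos, fun r hr => ?_⟩
    rw [S_zero s r hr]
    exact zero_le
  | succ d IH =>
    obtain ⟨B, hB, hIH⟩ := IH
    set C₁ : ℝ := (s-1)⁻¹ * 2^(s-1) with hC₁def
    have hC₁ : 0 < C₁ := by rw [hC₁def]; positivity
    set T : ℝ := ∑' m : ℤ, (1+|(m:ℝ)|)^(-s) with hTdef
    have hT0 : 0 ≤ T := tsum_nonneg fun m => by positivity
    refine ⟨2*C₁*T^d + 2*B, by positivity, fun r hr => ?_⟩
    have hr0 : (0:ℝ) < r := by linarith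
    have hlog0 : 0 ≤ Real.log r := Real.log_nonneg hr
    have hgpos : ∀ m : ℤ, (0:ℝ) < 1 + |(m:ℝ)| := fun m => by positivity
    have hg1 : ∀ m : ℤ, (1:ℝ) ≤ 1 + |(m:ℝ)| := fun m => by
      have := abs_nonneg ((m:ℝ)); linarith
    have hq0 : ∀ m : ℤ, (0:ℝ) ≤ (1+|(m:ℝ)|)^(-s) := fun m => by positivity
    -- Step A : rewrite as sum over pairs
    have stepA : (∑' n : Fin (d+1) → ℤ, (if r < ∏ j, (1 + |(n j : ℝ)|) then
          ENNReal.ofReal (∏ j, (1 + |(n j : ℝ)|) ^ (-s)) else 0))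
        = ∑' p : ℤ × (Fin d → ℤ),
            (if r < (1+|(p.1:ℝ)|) * ∏ j, (1 + |(p.2 j : ℝ)|) then
              ENNReal.ofReal ((1+|(p.1:ℝ)|)^(-s)) *
                ENNReal.ofReal (∏ j, (1 + |(p.2 j : ℝ)|) ^ (-s)) else 0) := by
      rw [← (Fin.consEquiv (fun _ : Fin (d+1) => ℤ)).tsum_eq]
      refine tsum_congr fun p => ?_
      have e1 : ∏ j, (1 + |(((Fin.consEquiv (fun _ : Fin (d+1) => ℤ)) p) j : ℝ)|)
          = (1+|(p.1:ℝ)|) * ∏ j, (1 + |(p.2 j : ℝ)|) := by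
        rw [Fin.prod_univ_succ]
        simp [Fin.consEquiv]
      have e2 : ∏ j, (1 + |(((Fin.consEquiv (fun _ : Fin (d+1) => ℤ)) p) j : ℝ)|) ^ (-s)
          = (1+|(p.1:ℝ)|)^(-s) * ∏ j, (1 + |(p.2 j : ℝ)|) ^ (-s) := by
        rw [Fin.prod_univ_succ]
        simp [Fin.consEquiv]
      rw [e1, e2, ENNReal.ofReal_mul (hq0 p.1)]
    rw [stepA]
    -- Step B : pointwise split
    have stepB : ∀ p : ℤ × (Fin d → ℤ),
        (if r < (1+|(p.1:ℝ)|) * ∏ j, (1 + |(p.2 j : ℝ)|) then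
            ENNReal.ofReal ((1+|(p.1:ℝ)|)^(-s)) *
              ENNReal.ofReal (∏ j, (1 + |(p.2 j : ℝ)|) ^ (-s)) else 0)
          ≤ (if r < 1+|(p.1:ℝ)| then ENNReal.ofReal ((1+|(p.1:ℝ)|)^(-s)) else 0) *
              ENNReal.ofReal (∏ j, (1 + |(p.2 j : ℝ)|) ^ (-s))
            + (if 1+|(p.1:ℝ)| ≤ r then ENNReal.ofReal ((1+|(p.1:ℝ)|)^(-s)) *
                (if r / (1+|(p.1:ℝ)|) < ∏ j, (1 + |(p.2 j : ℝ)|) then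
                  ENNReal.ofReal (∏ j, (1 + |(p.2 j : ℝ)|) ^ (-s)) else 0) else 0) := by
      intro p
      rcases lt_or_ge r (1+|(p.1:ℝ)|) with h | h
      · rw [if_pos h]
        refine le_trans ?_ le_self_add
        split
        · exact le_rfl
        · exact zero_le
      · rw [if_neg (not_lt.2 h), if_pos h, zero_mul, zero_add]
        by_cases h2 : r < (1+|(p.1:ℝ)|) * ∏ j, (1 + |(p.2 j : ℝ)|)
        · rw [if_pos h2, if_pos]
          rw [div_lt_iff₀ (hgpos p.1)]
          calc r < (1+|(p.1:ℝ)|) * ∏ j, (1 + |(p.2 j : ℝ)|) := h2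
            _ = (∏ j, (1 + |(p.2 j : ℝ)|)) * (1+|(p.1:ℝ)|) := mul_comm _ _
        · rw [if_neg h2]
          exact zero_le
    refine le_trans (le_trans (ENNReal.tsum_le_tsum stepB) (le_of_eq ENNReal.tsum_add)) ?_
    -- total for Q over dimension d
    have hTQ : ∑' n : Fin d → ℤ, ENNReal.ofReal (∏ j, (1 + |(n j : ℝ)|) ^ (-s))
        = (ENNReal.ofReal T)^d := by
      have e : ∀ n : Fin d → ℤ, ENNReal.ofReal (∏ j, (1 + |(n j : ℝ)|) ^ (-s))
          = ∏ j, ENNReal.ofReal ((1 + |(n j : ℝ)|) ^ (-s)) :=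
        fun n => ofReal_prod _ _ fun j _ => by positivity
      rw [tsum_congr e,
        tsum_pi_prod (fun z : ℤ => ENNReal.ofReal ((1 + |(z:ℝ)|) ^ (-s))) d]
      congr 1
      rw [hTdef]
      exact (ENNReal.ofReal_tsum_of_nonneg (fun m => by positivity)
        (int_summable_q s hs)).symm
    -- Step D : first piece
    have stepD : (∑' p : ℤ × (Fin d → ℤ),
          (if r < 1+|(p.1:ℝ)| then ENNReal.ofReal ((1+|(p.1:ℝ)|)^(-s)) else 0) *
            ENNReal.ofReal (∏ j, (1 + |(p.2 j : ℝ)|) ^ (-s)))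
        ≤ ENNReal.ofReal ((2*C₁*T^d) * r^(1-s)) := by
      rw [ENNReal.tsum_prod']
      have e : ∀ a : ℤ, (∑' b : Fin d → ℤ,
          (if r < 1+|(a:ℝ)| then ENNReal.ofReal ((1+|(a:ℝ)|)^(-s)) else 0) *
            ENNReal.ofReal (∏ j, (1 + |(b j : ℝ)|) ^ (-s)))
          = (if r < 1+|(a:ℝ)| then ENNReal.ofReal ((1+|(a:ℝ)|)^(-s)) else 0) *
              (ENNReal.ofReal T)^d := by
        intro a
        rw [ENNReal.tsum_mul_left, hTQ]
      rw [tsum_congr e, ENNReal.tsum_mul_right]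
      have e2 : ∀ a : ℤ, (if r < 1+|(a:ℝ)| then ENNReal.ofReal ((1+|(a:ℝ)|)^(-s)) else 0)
          = ENNReal.ofReal (if r < 1+|(a:ℝ)| then (1+|(a:ℝ)|)^(-s) else 0) := by
        intro a
        split <;> simp
      rw [tsum_congr e2]
      obtain ⟨hsummable, hbound⟩ := int_tail s hs r hr
      have h1 : (∑' m : ℤ, ENNReal.ofReal (if r < 1+|(m:ℝ)| then (1+|(m:ℝ)|)^(-s) else 0))
          ≤ ENNReal.ofReal (2*C₁ * r^(1-s)) := by
        refine lift_tsum_le (fun m => by positivity) hsummable ?_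
        rw [hC₁def]
        calc ∑' m : ℤ, (if r < 1+|(m:ℝ)| then (1+|(m:ℝ)|)^(-s) else 0)
            ≤ 2 * ((s-1)⁻¹ * 2^(s-1)) * r^(1-s) := hbound
          _ = 2 * ((s-1)⁻¹ * 2^(s-1)) * r^(1-s) := rfl
      calc (∑' m : ℤ, ENNReal.ofReal (if r < 1+|(m:ℝ)| then (1+|(m:ℝ)|)^(-s) else 0))
            * (ENNReal.ofReal T)^d
          ≤ ENNReal.ofReal (2*C₁ * r^(1-s)) * (ENNReal.ofReal T)^d :=
            mul_le_mul_left h1 _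
        _ = ENNReal.ofReal ((2*C₁*T^d) * r^(1-s)) := by
            rw [← ENNReal.ofReal_pow hT0, ← ENNReal.ofReal_mul (by positivity)]
            ring_nf
    -- Step E : second piece as iterated sum
    have stepE : (∑' p : ℤ × (Fin d → ℤ),
          (if 1+|(p.1:ℝ)| ≤ r then ENNReal.ofReal ((1+|(p.1:ℝ)|)^(-s)) *
            (if r / (1+|(p.1:ℝ)|) < ∏ j, (1 + |(p.2 j : ℝ)|) then
              ENNReal.ofReal (∏ j, (1 + |(p.2 j : ℝ)|) ^ (-s)) else 0) else 0))
        = ∑' m : ℤ, (if 1+|(m:ℝ)| ≤ r then ENNReal.ofReal ((1+|(m:ℝ)|)^(-s)) *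
            (∑' n : Fin d → ℤ, (if r / (1+|(m:ℝ)|) < ∏ j, (1 + |(n j : ℝ)|) then
              ENNReal.ofReal (∏ j, (1 + |(n j : ℝ)|) ^ (-s)) else 0)) else 0) := by
      rw [ENNReal.tsum_prod']
      refine tsum_congr fun m => ?_
      by_cases h : 1+|(m:ℝ)| ≤ r
      · rw [if_pos h, ← ENNReal.tsum_mul_left]
        exact tsum_congr fun n => by rw [if_pos h]
      · simp [h]
    rw [stepE]
    by_cases hd0 : d = 0
    · subst hd0
      have hz : ∀ m : ℤ, (if 1+|(m:ℝ)| ≤ r then ENNReal.ofReal ((1+|(m:ℝ)|)^(-s)) *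
            (∑' n : Fin 0 → ℤ, (if r / (1+|(m:ℝ)|) < ∏ j, (1 + |(n j : ℝ)|) then
              ENNReal.ofReal (∏ j, (1 + |(n j : ℝ)|) ^ (-s)) else 0)) else 0) = 0 := by
        intro m
        by_cases h : 1+|(m:ℝ)| ≤ r
        · rw [if_pos h, S_zero s (r / (1+|(m:ℝ)|)) ((one_le_div (hgpos m)).2 h), mul_zero]
        · rw [if_neg h]
      rw [tsum_congr hz, tsum_zero, add_zero]
      refine le_trans stepD (ENNReal.ofReal_le_ofReal ?_)
      simp only [pow_zero, mul_one, Nat.add_sub_cancel]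
      have hrp : 0 < r^(1-s) := Real.rpow_pos_of_pos hr0 _
      nlinarith
    · have hd1 : 1 ≤ d := Nat.one_le_iff_ne_zero.2 hd0
      have hL1 : (1:ℝ) ≤ 1 + Real.log r := by linarith
      have stepF : ∀ m : ℤ, (if 1+|(m:ℝ)| ≤ r then ENNReal.ofReal ((1+|(m:ℝ)|)^(-s)) *
            (∑' n : Fin d → ℤ, (if r / (1+|(m:ℝ)|) < ∏ j, (1 + |(n j : ℝ)|) then
              ENNReal.ofReal (∏ j, (1 + |(n j : ℝ)|) ^ (-s)) else 0)) else 0)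
          ≤ ENNReal.ofReal (B * (1 + Real.log r)^(d-1) * r^(1-s)) *
              (if 1+|(m:ℝ)| ≤ r then ENNReal.ofReal ((1+|(m:ℝ)|)⁻¹) else 0) := by
        intro m
        by_cases h : 1+|(m:ℝ)| ≤ r
        · rw [if_pos h, if_pos h]
          have hr'1 : 1 ≤ r / (1+|(m:ℝ)|) := (one_le_div (hgpos m)).2 h
          have hr'r : r / (1+|(m:ℝ)|) ≤ r := div_le_self hr0.le (hg1 m)
          have hr'0 : (0:ℝ) < r / (1+|(m:ℝ)|) := by linarith
          have hlog' : Real.log (r / (1+|(m:ℝ)|)) ≤ Real.log r :=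
            Real.log_le_log hr'0 hr'r
          have hlog'0 : 0 ≤ Real.log (r / (1+|(m:ℝ)|)) := Real.log_nonneg hr'1
          calc ENNReal.ofReal ((1+|(m:ℝ)|)^(-s)) *
                (∑' n : Fin d → ℤ, (if r / (1+|(m:ℝ)|) < ∏ j, (1 + |(n j : ℝ)|) then
                  ENNReal.ofReal (∏ j, (1 + |(n j : ℝ)|) ^ (-s)) else 0))
              ≤ ENNReal.ofReal ((1+|(m:ℝ)|)^(-s)) *
                  ENNReal.ofReal (B * (r / (1+|(m:ℝ)|))^(1-s) *
                    (1 + Real.log (r / (1+|(m:ℝ)|)))^(d-1)) :=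
                mul_le_mul_right (hIH _ hr'1) _
            _ ≤ ENNReal.ofReal ((1+|(m:ℝ)|)^(-s)) *
                  ENNReal.ofReal (B * (r / (1+|(m:ℝ)|))^(1-s) * (1 + Real.log r)^(d-1)) := by
                refine mul_le_mul_right (ENNReal.ofReal_le_ofReal ?_) _
                have hp : (1 + Real.log (r / (1+|(m:ℝ)|)))^(d-1) ≤ (1 + Real.log r)^(d-1) :=
                  pow_le_pow_left₀ (by linarith) (by linarith) _
                exact mul_le_mul_of_nonneg_left hp (by positivity)
            _ = ENNReal.ofReal (B * (1 + Real.log r)^(d-1) * r^(1-s)) *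
                  ENNReal.ofReal ((1+|(m:ℝ)|)⁻¹) := by
                rw [← ENNReal.ofReal_mul (hq0 m), ← ENNReal.ofReal_mul (by positivity)]
                congr 1
                have e1 : (r / (1+|(m:ℝ)|))^(1-s) = r^(1-s) / (1+|(m:ℝ)|)^(1-s) :=
                  Real.div_rpow hr0.le (hgpos m).le (1-s)
                have e2 : (1+|(m:ℝ)|)^(-s) / (1+|(m:ℝ)|)^(1-s) = (1+|(m:ℝ)|)⁻¹ := by
                  rw [← Real.rpow_sub (hgpos m)]
                  rw [show -s - (1-s) = (-1:ℝ) by ring, Real.rpow_neg_one]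
                calc (1+|(m:ℝ)|)^(-s) *
                      (B * (r / (1+|(m:ℝ)|))^(1-s) * (1 + Real.log r)^(d-1))
                    = B * (1 + Real.log r)^(d-1) * r^(1-s) *
                        ((1+|(m:ℝ)|)^(-s) / (1+|(m:ℝ)|)^(1-s)) := by rw [e1]; ring
                  _ = B * (1 + Real.log r)^(d-1) * r^(1-s) * (1+|(m:ℝ)|)⁻¹ := by rw [e2]
        · rw [if_neg h, if_neg h, mul_zero]
      have sumF : (∑' m : ℤ, (if 1+|(m:ℝ)| ≤ r then ENNReal.ofReal ((1+|(m:ℝ)|)^(-s)) *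
            (∑' n : Fin d → ℤ, (if r / (1+|(m:ℝ)|) < ∏ j, (1 + |(n j : ℝ)|) then
              ENNReal.ofReal (∏ j, (1 + |(n j : ℝ)|) ^ (-s)) else 0)) else 0))
          ≤ ENNReal.ofReal (B * (1 + Real.log r)^(d-1) * r^(1-s)) *
              ENNReal.ofReal (2 * (1 + Real.log r)) := by
        refine le_trans (ENNReal.tsum_le_tsum stepF) ?_
        rw [ENNReal.tsum_mul_left]
        refine mul_le_mul_right ?_ _
        have e2 : ∀ a : ℤ, (if 1+|(a:ℝ)| ≤ r then ENNReal.ofReal ((1+|(a:ℝ)|)⁻¹) else 0)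
            = ENNReal.ofReal (if 1+|(a:ℝ)| ≤ r then (1+|(a:ℝ)|)⁻¹ else 0) := by
          intro a
          split <;> simp
        rw [tsum_congr e2]
        obtain ⟨hsumh, hbndh⟩ := int_harm r hr
        exact lift_tsum_le (fun m => by positivity) hsumh hbndh
      refine le_trans (add_le_add stepD sumF) ?_
      rw [← ENNReal.ofReal_mul (by positivity),
        ← ENNReal.ofReal_add (by positivity) (by positivity)]
      refine ENNReal.ofReal_le_ofReal ?_
      have epow : (1 + Real.log r)^(d-1) * (1 + Real.log r) = (1 + Real.log r)^d := by
        rw [← pow_succ, Nat.sub_add_cancel hd1]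
      have hrp : (0:ℝ) < r^(1-s) := Real.rpow_pos_of_pos hr0 _
      have hLd : (1:ℝ) ≤ (1 + Real.log r)^d := by
        have := pow_le_pow_left₀ (by norm_num : (0:ℝ) ≤ 1) hL1 d
        simpa using this
      have hde : d + 1 - 1 = d := by omega
      rw [hde]
      calc 2*C₁*T^d * r^(1-s)
            + B * (1 + Real.log r)^(d-1) * r^(1-s) * (2 * (1 + Real.log r))
          = 2*C₁*T^d * r^(1-s)
            + 2*B * r^(1-s) * ((1 + Real.log r)^(d-1) * (1 + Real.log r)) := by ring
        _ = 2*C₁*T^d * r^(1-s) + 2*B * r^(1-s) * (1 + Real.log r)^d := by rw [epow]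
        _ ≤ 2*C₁*T^d * r^(1-s) * (1 + Real.log r)^d
            + 2*B * r^(1-s) * (1 + Real.log r)^d := by
              nlinarith [mul_le_mul_of_nonneg_left hLd
                (show (0:ℝ) ≤ 2*C₁*T^d * r^(1-s) by positivity)]
        _ = (2*C₁*T^d + 2*B) * r^(1-s) * (1 + Real.log r)^d := by ring

private lemma cs_tsum {ι : Type*} (f g : ι → ℝ) (hf0 : ∀ x, 0 ≤ f x) (hg0 : ∀ x, 0 ≤ g x)
    (hf : Summable (fun x => f x ^ 2)) (hg : Summable (fun x => g x ^ 2)) :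
    Summable (fun x => f x * g x) ∧
    ∑' x, f x * g x ≤ Real.sqrt (∑' x, f x ^ 2) * Real.sqrt (∑' x, g x ^ 2) := by
  have hsum : Summable (fun x => f x * g x) := by
    refine Summable.of_nonneg_of_le (fun x => mul_nonneg (hf0 x) (hg0 x)) (fun x => ?_)
      ((hf.add hg).div_const 2)
    nlinarith [two_mul_le_add_sq (f x) (g x)]
  refine ⟨hsum, hsum.tsum_le_of_sum_le fun F => ?_⟩
  calc ∑ x ∈ F, f x * g x
      ≤ Real.sqrt (∑ x ∈ F, f x ^ 2) * Real.sqrt (∑ x ∈ F, g x ^ 2) :=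
        Real.sum_mul_le_sqrt_mul_sqrt F f g
    _ ≤ Real.sqrt (∑' x, f x ^ 2) * Real.sqrt (∑' x, g x ^ 2) := by
        have h1 : ∑ x ∈ F, f x ^ 2 ≤ ∑' x, f x ^ 2 :=
          Summable.sum_le_tsum F (fun x _ => sq_nonneg _) hf
        have h2 : ∑ x ∈ F, g x ^ 2 ≤ ∑' x, g x ^ 2 :=
          Summable.sum_le_tsum F (fun x _ => sq_nonneg _) hg
        exact mul_le_mul (Real.sqrt_le_sqrt h1) (Real.sqrt_le_sqrt h2)
          (Real.sqrt_nonneg _) (Real.sqrt_nonneg _)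

/-- Hyperbolic cross tail bound in `H^α_mix`: with `h = min_j α_j > 1/2` and
`Λ = {n : ∏_j (1+|n_j|) ≤ r}` the hyperbolic cross of order `r ≥ 2`, every `f ∈ H^α_mix`
(given through its Fourier coefficients `c`) satisfies
`Σ_{n∉Λ} |c_n| ≲_{d,α} r^{−h+1/2} (log r)^{(d−1)/2} ‖f‖_{H^α_mix}`. -/
theorem stmt19 (d : ℕ) (hd : 0 < d) (α : Fin d → ℝ)
    (h : ℝ) (hle : ∀ j, h ≤ α j) (hmem : ∃ j, α j = h) (hh : 1 / 2 < h) :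
    ∃ C : ℝ, 0 < C ∧ ∀ r : ℝ, 2 ≤ r → ∀ c : (Fin d → ℤ) → ℂ,
      Summable (fun n => (∏ j, (1 + |(n j : ℝ)|) ^ (2 * α j)) * ‖c n‖ ^ 2) →
      Summable (fun n : {n : (Fin d → ℤ) // ¬ (∏ j, (1 + |(n j : ℝ)|)) ≤ r} =>
        ‖c n.1‖) ∧
      (∑' n : {n : (Fin d → ℤ) // ¬ (∏ j, (1 + |(n j : ℝ)|)) ≤ r}, ‖c n.1‖) ≤
        C * r ^ (-h + 1 / 2) * (Real.log r) ^ (((d : ℝ) - 1) / 2) *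
          Real.sqrt (∑' n, (∏ j, (1 + |(n j : ℝ)|) ^ (2 * α j)) * ‖c n‖ ^ 2) := by
  have hs : (1:ℝ) < 2*h := by linarith
  obtain ⟨B, hB, hKEY⟩ := key (2*h) hs d
  have hlog2 : (0:ℝ) < Real.log 2 := Real.log_pos (by norm_num)
  set K : ℝ := 1 + (Real.log 2)⁻¹ with hKdef
  have hK0 : (0:ℝ) < K := by rw [hKdef]; positivity
  refine ⟨Real.sqrt (B * K^(d-1)), Real.sqrt_pos.2 (by positivity), fun r hr c hc => ?_⟩
  have hr1 : (1:ℝ) ≤ r := by linarith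
  have hr0 : (0:ℝ) < r := by linarith
  have hlogr : Real.log 2 ≤ Real.log r := Real.log_le_log (by norm_num) hr
  have hlogr0 : (0:ℝ) < Real.log r := lt_of_lt_of_le hlog2 hlogr
  -- weight facts
  have hbase : ∀ (n : Fin d → ℤ) (j : Fin d), (1:ℝ) ≤ 1 + |(n j : ℝ)| := by
    intro n j
    have := abs_nonneg ((n j : ℝ))
    linarith
  have hW0 : ∀ n : Fin d → ℤ, (0:ℝ) < ∏ j, (1 + |(n j : ℝ)|) ^ (2 * α j) := by
    intro n
    exact Finset.prod_pos fun j _ =>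
      Real.rpow_pos_of_pos (by linarith [hbase n j]) _
  have hWinv : ∀ n : Fin d → ℤ,
      (∏ j, (1 + |(n j : ℝ)|) ^ (2 * α j))⁻¹ ≤ ∏ j, (1 + |(n j : ℝ)|) ^ (-(2*h)) := by
    intro n
    have h1 : ∏ j, (1 + |(n j : ℝ)|) ^ (2*h) ≤ ∏ j, (1 + |(n j : ℝ)|) ^ (2 * α j) :=
      Finset.prod_le_prod (fun j _ => by positivity)
        (fun j _ => Real.rpow_le_rpow_of_exponent_le (hbase n j) (by linarith [hle j]))
    have h2 : (0:ℝ) < ∏ j, (1 + |(n j : ℝ)|) ^ (2*h) :=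
      Finset.prod_pos fun j _ => Real.rpow_pos_of_pos (by linarith [hbase n j]) _
    have h3 : (∏ j, (1 + |(n j : ℝ)|) ^ (2 * α j))⁻¹ ≤ (∏ j, (1 + |(n j : ℝ)|) ^ (2*h))⁻¹ :=
      inv_anti₀ h2 h1
    refine h3.trans (le_of_eq ?_)
    rw [← Finset.prod_inv_distrib]
    exact Finset.prod_congr rfl fun j _ => by
      rw [← Real.rpow_neg (by positivity)]
  -- ENNReal bound for the inverse weights over the tail
  have hENN : (∑' x : {n : (Fin d → ℤ) // ¬ (∏ j, (1 + |(n j : ℝ)|)) ≤ r},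
        ENNReal.ofReal ((∏ j, (1 + |(x.1 j : ℝ)|) ^ (2 * α j))⁻¹))
      ≤ ENNReal.ofReal (B * r ^ (1-2*h) * (1 + Real.log r) ^ (d - 1)) := by
    calc (∑' x : {n : (Fin d → ℤ) // ¬ (∏ j, (1 + |(n j : ℝ)|)) ≤ r},
          ENNReal.ofReal ((∏ j, (1 + |(x.1 j : ℝ)|) ^ (2 * α j))⁻¹))
        ≤ ∑' x : {n : (Fin d → ℤ) // ¬ (∏ j, (1 + |(n j : ℝ)|)) ≤ r},
            ENNReal.ofReal (∏ j, (1 + |(x.1 j : ℝ)|) ^ (-(2*h))) :=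
          ENNReal.tsum_le_tsum fun x => ENNReal.ofReal_le_ofReal (hWinv x.1)
      _ = ∑' n : Fin d → ℤ, Set.indicator {n : Fin d → ℤ | ¬ (∏ j, (1 + |(n j : ℝ)|)) ≤ r}
            (fun n => ENNReal.ofReal (∏ j, (1 + |(n j : ℝ)|) ^ (-(2*h)))) n :=
          _root_.tsum_subtype {n : Fin d → ℤ | ¬ (∏ j, (1 + |(n j : ℝ)|)) ≤ r}
            (fun n => ENNReal.ofReal (∏ j, (1 + |(n j : ℝ)|) ^ (-(2*h))))
      _ = ∑' n : Fin d → ℤ, (if r < ∏ j, (1 + |(n j : ℝ)|) then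
            ENNReal.ofReal (∏ j, (1 + |(n j : ℝ)|) ^ (-(2*h))) else 0) := by
          refine tsum_congr fun n => ?_
          rw [Set.indicator_apply]
          by_cases hmem2 : r < ∏ j, (1 + |(n j : ℝ)|)
          · rw [if_pos hmem2, if_pos (by simpa [Set.mem_setOf_eq] using not_le.2 hmem2)]
          · rw [if_neg hmem2, if_neg (by simpa [Set.mem_setOf_eq, not_not] using not_lt.1 hmem2)]
      _ ≤ ENNReal.ofReal (B * r ^ (1-2*h) * (1 + Real.log r) ^ (d - 1)) := hKEY r hr1
  have hM0 : (0:ℝ) ≤ B * r ^ (1-2*h) * (1 + Real.log r) ^ (d - 1) := by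
    have : (0:ℝ) ≤ (1 + Real.log r) ^ (d - 1) := pow_nonneg (by linarith) _
    positivity
  have hinv0 : ∀ x : {n : (Fin d → ℤ) // ¬ (∏ j, (1 + |(n j : ℝ)|)) ≤ r},
      (0:ℝ) ≤ (∏ j, (1 + |(x.1 j : ℝ)|) ^ (2 * α j))⁻¹ := fun x => (inv_nonneg).2 (hW0 x.1).le
  have hne : (∑' x : {n : (Fin d → ℤ) // ¬ (∏ j, (1 + |(n j : ℝ)|)) ≤ r},
        ENNReal.ofReal ((∏ j, (1 + |(x.1 j : ℝ)|) ^ (2 * α j))⁻¹)) ≠ ⊤ :=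
    ne_top_of_le_ne_top ENNReal.ofReal_ne_top hENN
  have hsumWinv : Summable (fun x : {n : (Fin d → ℤ) // ¬ (∏ j, (1 + |(n j : ℝ)|)) ≤ r} =>
      (∏ j, (1 + |(x.1 j : ℝ)|) ^ (2 * α j))⁻¹) := by
    have := ENNReal.summable_toReal hne
    refine this.congr fun x => ?_
    exact ENNReal.toReal_ofReal (hinv0 x)
  have hWbound : (∑' x : {n : (Fin d → ℤ) // ¬ (∏ j, (1 + |(n j : ℝ)|)) ≤ r},
        (∏ j, (1 + |(x.1 j : ℝ)|) ^ (2 * α j))⁻¹)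
      ≤ B * r ^ (1-2*h) * (1 + Real.log r) ^ (d - 1) := by
    rw [← ENNReal.ofReal_le_ofReal_iff hM0]
    rw [ENNReal.ofReal_tsum_of_nonneg hinv0 hsumWinv]
    exact hENN
  -- second factor
  have hb2 : Summable (fun x : {n : (Fin d → ℤ) // ¬ (∏ j, (1 + |(n j : ℝ)|)) ≤ r} =>
      (∏ j, (1 + |(x.1 j : ℝ)|) ^ (2 * α j)) * ‖c x.1‖ ^ 2) :=
    hc.subtype _
  have hb2le : (∑' x : {n : (Fin d → ℤ) // ¬ (∏ j, (1 + |(n j : ℝ)|)) ≤ r},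
        (∏ j, (1 + |(x.1 j : ℝ)|) ^ (2 * α j)) * ‖c x.1‖ ^ 2)
      ≤ ∑' n, (∏ j, (1 + |(n j : ℝ)|) ^ (2 * α j)) * ‖c n‖ ^ 2 := by
    have e0 : (∑' x : {n : (Fin d → ℤ) // ¬ (∏ j, (1 + |(n j : ℝ)|)) ≤ r},
          (∏ j, (1 + |(x.1 j : ℝ)|) ^ (2 * α j)) * ‖c x.1‖ ^ 2)
        = ∑' n : Fin d → ℤ, Set.indicator {n : Fin d → ℤ | ¬ (∏ j, (1 + |(n j : ℝ)|)) ≤ r}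
            (fun n => (∏ j, (1 + |(n j : ℝ)|) ^ (2 * α j)) * ‖c n‖ ^ 2) n :=
      _root_.tsum_subtype {n : Fin d → ℤ | ¬ (∏ j, (1 + |(n j : ℝ)|)) ≤ r}
        (fun n => (∏ j, (1 + |(n j : ℝ)|) ^ (2 * α j)) * ‖c n‖ ^ 2)
    rw [e0]
    refine Summable.tsum_le_tsum (fun n => ?_) (hc.indicator _) hc
    exact Set.indicator_le_self' (fun a _ => by positivity) n
  -- Cauchy-Schwarz
  set f : {n : (Fin d → ℤ) // ¬ (∏ j, (1 + |(n j : ℝ)|)) ≤ r} → ℝ :=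
    fun x => Real.sqrt ((∏ j, (1 + |(x.1 j : ℝ)|) ^ (2 * α j))⁻¹) with hfdef
  set g : {n : (Fin d → ℤ) // ¬ (∏ j, (1 + |(n j : ℝ)|)) ≤ r} → ℝ :=
    fun x => Real.sqrt ((∏ j, (1 + |(x.1 j : ℝ)|) ^ (2 * α j)) * ‖c x.1‖ ^ 2) with hgdef
  have hf2 : ∀ x, f x ^ 2 = (∏ j, (1 + |(x.1 j : ℝ)|) ^ (2 * α j))⁻¹ := fun x =>
    Real.sq_sqrt (hinv0 x)
  have hg2 : ∀ x, g x ^ 2 = (∏ j, (1 + |(x.1 j : ℝ)|) ^ (2 * α j)) * ‖c x.1‖ ^ 2 := fun x =>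
    Real.sq_sqrt (by positivity)
  have hfg : ∀ x, f x * g x = ‖c x.1‖ := by
    intro x
    rw [hfdef, hgdef]
    dsimp only
    rw [← Real.sqrt_mul (hinv0 x)]
    rw [show (∏ j, (1 + |(x.1 j : ℝ)|) ^ (2 * α j))⁻¹ *
        ((∏ j, (1 + |(x.1 j : ℝ)|) ^ (2 * α j)) * ‖c x.1‖ ^ 2) = ‖c x.1‖ ^ 2 by
      field_simp]
    exact Real.sqrt_sq (norm_nonneg _)
  obtain ⟨hS, hCS⟩ := cs_tsum f g (fun x => Real.sqrt_nonneg _) (fun x => Real.sqrt_nonneg _)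
    ((summable_congr fun x => (hf2 x).symm).1 hsumWinv)
    ((summable_congr fun x => (hg2 x).symm).1 hb2)
  constructor
  · exact hS.congr hfg
  · have e1 : (∑' x : {n : (Fin d → ℤ) // ¬ (∏ j, (1 + |(n j : ℝ)|)) ≤ r}, ‖c x.1‖)
        = ∑' x, f x * g x := (tsum_congr hfg).symm
    rw [e1]
    have e2 : (∑' x, f x ^ 2) = ∑' x : {n : (Fin d → ℤ) // ¬ (∏ j, (1 + |(n j : ℝ)|)) ≤ r},
        (∏ j, (1 + |(x.1 j : ℝ)|) ^ (2 * α j))⁻¹ := tsum_congr hf2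
    have e3 : (∑' x, g x ^ 2) = ∑' x : {n : (Fin d → ℤ) // ¬ (∏ j, (1 + |(n j : ℝ)|)) ≤ r},
        (∏ j, (1 + |(x.1 j : ℝ)|) ^ (2 * α j)) * ‖c x.1‖ ^ 2 := tsum_congr hg2
    -- final algebra
    have e_r : Real.sqrt (r^(1-2*h)) = r^(-h+1/2) := by
      rw [Real.sqrt_eq_rpow, ← Real.rpow_mul hr0.le]
      congr 1
      ring
    have e_log : Real.sqrt ((Real.log r)^(d-1)) = (Real.log r)^(((d:ℝ)-1)/2) := by
      rw [Real.sqrt_eq_rpow, ← Real.rpow_natCast (Real.log r) (d-1),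
        ← Real.rpow_mul hlogr0.le]
      congr 1
      rw [Nat.cast_pred hd]
      ring
    calc ∑' x, f x * g x
        ≤ Real.sqrt (∑' x, f x ^ 2) * Real.sqrt (∑' x, g x ^ 2) := hCS
      _ ≤ Real.sqrt (B * r^(1-2*h) * (1 + Real.log r)^(d-1)) *
            Real.sqrt (∑' n, (∏ j, (1 + |(n j : ℝ)|) ^ (2 * α j)) * ‖c n‖ ^ 2) := by
          rw [e2, e3]
          exact mul_le_mul (Real.sqrt_le_sqrt hWbound) (Real.sqrt_le_sqrt hb2le)
            (Real.sqrt_nonneg _) (Real.sqrt_nonneg _)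
      _ ≤ Real.sqrt (B*K^(d-1)) * r^(-h+1/2) * (Real.log r)^(((d:ℝ)-1)/2) *
            Real.sqrt (∑' n, (∏ j, (1 + |(n j : ℝ)|) ^ (2 * α j)) * ‖c n‖ ^ 2) := by
          refine mul_le_mul_of_nonneg_right ?_ (Real.sqrt_nonneg _)
          have h1 : (1:ℝ) + Real.log r ≤ K * Real.log r := by
            have h2 : (1:ℝ) ≤ Real.log r * (Real.log 2)⁻¹ := by
              rw [← div_eq_mul_inv]
              exact (one_le_div hlog2).2 hlogr
            rw [hKdef]
            nlinarith
          have hrp0 : (0:ℝ) ≤ r^(1-2*h) := Real.rpow_nonneg hr0.le _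
          have h3 : B * r^(1-2*h) * (1+Real.log r)^(d-1)
              ≤ (B*K^(d-1)) * (r^(1-2*h) * (Real.log r)^(d-1)) := by
            have h4 : (1+Real.log r)^(d-1) ≤ K^(d-1) * (Real.log r)^(d-1) := by
              have := pow_le_pow_left₀ (by linarith : (0:ℝ) ≤ 1 + Real.log r) h1 (d-1)
              rwa [mul_pow] at this
            calc B * r^(1-2*h) * (1+Real.log r)^(d-1)
                ≤ B * r^(1-2*h) * (K^(d-1) * (Real.log r)^(d-1)) :=
                  mul_le_mul_of_nonneg_left h4 (by positivity)
              _ = (B*K^(d-1)) * (r^(1-2*h) * (Real.log r)^(d-1)) := by ring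
          calc Real.sqrt (B * r^(1-2*h) * (1+Real.log r)^(d-1))
              ≤ Real.sqrt ((B*K^(d-1)) * (r^(1-2*h) * (Real.log r)^(d-1))) :=
                Real.sqrt_le_sqrt h3
            _ = Real.sqrt (B*K^(d-1)) *
                  (Real.sqrt (r^(1-2*h)) * Real.sqrt ((Real.log r)^(d-1))) := by
                rw [Real.sqrt_mul (by positivity), Real.sqrt_mul hrp0]
            _ = Real.sqrt (B*K^(d-1)) * r^(-h+1/2) * (Real.log r)^(((d:ℝ)-1)/2) := by
                rw [e_r, e_log]
                ring
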